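/- Let d ≥ 1 and m a natural number. Let v₀, v₁, …, v_m be d×d complex matrices with v_a · v_b = 0 for all 0 ≤ a, b ≤ m, and let M_j, for integers j with −m−1 ≤ j ≤ m, be d×d complex matrices satisfying, for every integer j with −m−1 ≤ j ≤ −1, the relation M_j = Σ_{l=j+1}^{j+m+1} M_l · v_{j+m+1−l}. Then for every integer s with −m−1 ≤ s ≤ −1, Σ_{j=−m−1}^{s} M_j · v_{s−j} = 0. -/
import Mathlib

theorem residue_relations_imply_consistency
    (d : ℕ) (hd : 1 ≤ d) (m : ℕ)
    (v : ℕ → Matrix (Fin d) (Fin d) ℂ)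
    (hv : ∀ a b : ℕ, a ≤ m → b ≤ m → v a * v b = 0)
    (M : ℤ → Matrix (Fin d) (Fin d) ℂ)
    (hM : ∀ j : ℤ, -(m + 1 : ℤ) ≤ j → j ≤ -1 →
      M j = ∑ l ∈ Finset.Icc (j + 1) (j + m + 1), M l * v (j + m + 1 - l).toNat) :
    ∀ s : ℤ, -(m + 1 : ℤ) ≤ s → s ≤ -1 →
      ∑ j ∈ Finset.Icc (-(m + 1 : ℤ)) s, M j * v (s - j).toNat = 0 := by
  intro s hs1 hs2
  apply Finset.sum_eq_zero
  intro j hj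
  simp only [Finset.mem_Icc] at hj
  rw [hM j hj.1 (hj.2.trans hs2), Finset.sum_mul]
  apply Finset.sum_eq_zero
  intro l hl
  simp only [Finset.mem_Icc] at hl
  rw [mul_assoc, hv _ _ (by omega) (by omega), mul_zero]
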